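/- Let a > 0, let A be a real m × n matrix and b ∈ ℝᵐ with SOL(A,b) nonempty. Let (λ_k) be a sequence of positive real numbers with λ_k → 0, and for each k let x_k ≥ 0 be a global minimizer over {x ∈ ℝⁿ : x ≥ 0} of the function x ↦ ‖Ax − b‖₂² + λ_k P_a(x). Then every accumulation point x* of the sequence (x_k) satisfies A x* = b, x* ≥ 0, and P_a(x*) ≤ P_a(x) for all x ∈ SOL(A,b); that is, x* is a global minimizer of P_a over SOL(A,b). -/

import Mathlib

open Matrix Filter Topology

noncomputable def rho (a t : ℝ) : ℝ := a * |t| / (a * |t| + 1)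

noncomputable def Pa {n : ℕ} (a : ℝ) (x : Fin n → ℝ) : ℝ := ∑ i, rho a (x i)

open scoped Classical in
noncomputable def l0 {n : ℕ} (x : Fin n → ℝ) : ℕ :=
  (Finset.univ.filter fun i => x i ≠ 0).card

def SOL {m n : ℕ} (A : Matrix (Fin m) (Fin n) ℝ) (b : Fin m → ℝ) : Set (Fin n → ℝ) :=
  {x | A.mulVec x = b ∧ 0 ≤ x}

noncomputable def sqN {n : ℕ} (v : Fin n → ℝ) : ℝ := ∑ i, (v i) ^ 2

def projPos {n : ℕ} (v : Fin n → ℝ) : Fin n → ℝ := fun i => max 0 (v i)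

noncomputable def C1 {m n : ℕ} (A : Matrix (Fin m) (Fin n) ℝ) (b : Fin m → ℝ)
    (lam a : ℝ) (x : Fin n → ℝ) : ℝ :=
  sqN (A.mulVec x - b) + lam * Pa a x

noncomputable def C2 {m n : ℕ} (A : Matrix (Fin m) (Fin n) ℝ) (b : Fin m → ℝ)
    (lam a mu : ℝ) (x z : Fin n → ℝ) : ℝ :=
  mu * (C1 A b lam a x - sqN (A.mulVec x - A.mulVec z)) + sqN (x - z)

noncomputable def Bmu {m n : ℕ} (A : Matrix (Fin m) (Fin n) ℝ) (b : Fin m → ℝ)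
    (mu : ℝ) (z : Fin n → ℝ) : Fin n → ℝ :=
  z + mu • (Aᵀ.mulVec (b - A.mulVec z))


lemma aux_mem_closed {v : ℕ → ℝ} {y : ℝ} {S : Set ℝ} (hS : IsClosed S)
    (hv : ∀ k, v k ∈ S) (h : MapClusterPt y atTop v) : y ∈ S := by
  have h0 : ClusterPt y (Filter.map v atTop) := mapClusterPt_def.1 h
  have h1 : ClusterPt y (Filter.principal S) :=
    h0.mono (le_principal_iff.2 (Filter.mem_map.2
      (Filter.eventually_atTop.2 ⟨0, fun k _ => hv k⟩)))
  exact hS.closure_eq ▸ mem_closure_iff_clusterPt.2 h1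

lemma aux_eq_of_tendsto {v : ℕ → ℝ} {y L : ℝ} (h : MapClusterPt y atTop v)
    (hv : Tendsto v atTop (nhds L)) : y = L :=
  eq_of_nhds_neBot ((show (nhds y ⊓ Filter.map v atTop).NeBot from
    mapClusterPt_def.1 h).mono (inf_le_inf_left _ hv))

lemma rho_nonneg {a : ℝ} (ha : 0 < a) (t : ℝ) : 0 ≤ rho a t := by
  unfold rho; positivity

lemma rho_cont {a : ℝ} (ha : 0 < a) : Continuous (rho a) := by
  apply Continuous.div
  · exact continuous_const.mul continuous_abs
  · exact (continuous_const.mul continuous_abs).add continuous_const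
  · intro t; positivity

lemma Pa_cont {n : ℕ} {a : ℝ} (ha : 0 < a) : Continuous (Pa a : (Fin n → ℝ) → ℝ) := by
  unfold Pa
  exact continuous_finset_sum _ fun i _ => (rho_cont ha).comp (continuous_apply i)

lemma sqN_cont {ms ns : ℕ} (A : Matrix (Fin ms) (Fin ns) ℝ) (b : Fin ms → ℝ) :
    Continuous (fun x : Fin ns → ℝ => sqN (A.mulVec x - b)) := by
  unfold sqN Matrix.mulVec dotProduct
  apply continuous_finset_sum _ fun i _ => ?_
  exact ((continuous_finset_sum _ fun j _ =>
    continuous_const.mul (continuous_apply j)).sub continuous_const).pow 2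

theorem stmt7 {m n : ℕ} (a : ℝ) (ha : 0 < a)
    (A : Matrix (Fin m) (Fin n) ℝ) (b : Fin m → ℝ) (hne : (SOL A b).Nonempty)
    (lam : ℕ → ℝ) (hlam : ∀ k, 0 < lam k)
    (hlim : Filter.Tendsto lam Filter.atTop (nhds 0))
    (xseq : ℕ → (Fin n → ℝ)) (hpos : ∀ k, 0 ≤ xseq k)
    (hminseq : ∀ k, ∀ x : Fin n → ℝ, 0 ≤ x →
      sqN (A.mulVec (xseq k) - b) + lam k * Pa a (xseq k) ≤
        sqN (A.mulVec x - b) + lam k * Pa a x)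
    (xstar : Fin n → ℝ) (hcl : MapClusterPt xstar Filter.atTop xseq) :
    A.mulVec xstar = b ∧ 0 ≤ xstar ∧ ∀ x ∈ SOL A b, Pa a xstar ≤ Pa a x := by
  obtain ⟨xb, hAxb, hxbpos⟩ := hne
  have hPa_nonneg : ∀ x : Fin n → ℝ, 0 ≤ Pa a x := fun x =>
    Finset.sum_nonneg fun i _ => rho_nonneg ha _
  have hsqN_nonneg : ∀ v : Fin m → ℝ, 0 ≤ sqN v := fun v =>
    Finset.sum_nonneg fun i _ => sq_nonneg _
  have key : ∀ x ∈ SOL A b, ∀ k,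
      sqN (A.mulVec (xseq k) - b) + lam k * Pa a (xseq k) ≤ lam k * Pa a x := by
    intro x hx k
    have h1 := hminseq k x hx.2
    have h2 : sqN (A.mulVec x - b) = 0 := by rw [hx.1, sub_self]; simp [sqN]
    rwa [h2, zero_add] at h1
  have hPa_le : ∀ x ∈ SOL A b, ∀ k, Pa a (xseq k) ≤ Pa a x := by
    intro x hx k
    have h1 := key x hx k
    have h2 := hsqN_nonneg (A.mulVec (xseq k) - b)
    have h3 : lam k * Pa a (xseq k) ≤ lam k * Pa a x := by linarith
    exact le_of_mul_le_mul_left h3 (hlam k)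
  have hg_le : ∀ k, sqN (A.mulVec (xseq k) - b) ≤ lam k * Pa a xb := by
    intro k
    have h1 := key xb ⟨hAxb, hxbpos⟩ k
    have h2 := mul_nonneg (hlam k).le (hPa_nonneg (xseq k))
    linarith
  have h_tend : Tendsto (fun k => sqN (A.mulVec (xseq k) - b)) atTop (nhds 0) := by
    have hmul : Tendsto (fun k => lam k * Pa a xb) atTop (nhds 0) := by
      simpa using hlim.mul_const (Pa a xb)
    exact squeeze_zero (fun k => hsqN_nonneg _) hg_le hmul
  have hgx : MapClusterPt (sqN (A.mulVec xstar - b)) atTop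
      ((fun x => sqN (A.mulVec x - b)) ∘ xseq) :=
    hcl.continuousAt_comp (f := fun x => sqN (A.mulVec x - b)) (sqN_cont A b).continuousAt
  have h0 : sqN (A.mulVec xstar - b) = 0 := aux_eq_of_tendsto hgx (by simpa [Function.comp_def] using h_tend)
  have hAx : A.mulVec xstar = b := by
    funext i
    simp only [sqN] at h0
    have h1 := (Finset.sum_eq_zero_iff_of_nonneg
      (fun i _ => sq_nonneg ((A.mulVec xstar - b) i))).1 h0 i (Finset.mem_univ i)
    have h2 : (A.mulVec xstar - b) i = 0 := by
      have := pow_eq_zero_iff (n := 2) (by norm_num) |>.1 h1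
      exact this
    have h3 : A.mulVec xstar i - b i = 0 := h2
    linarith
  refine ⟨hAx, ?_, ?_⟩
  · intro i
    have hci : MapClusterPt (xstar i) atTop (fun k => xseq k i) :=
      hcl.continuousAt_comp (continuous_apply i).continuousAt
    exact aux_mem_closed isClosed_Ici (fun k => hpos k i) hci
  · intro x hx
    have hc : MapClusterPt (Pa a xstar) atTop (fun k => Pa a (xseq k)) :=
      hcl.continuousAt_comp (Pa_cont ha).continuousAt
    exact aux_mem_closed (S := Set.Iic (Pa a x)) isClosed_Iic (fun k => hPa_le x hx k) hc
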